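/- The degenerate r-Stirling numbers of the second kind satisfy {n+r, k+r}_{r,λ} = Σ_{i=k}^{n} C(n,i) (r)_{n−i,λ} S_{2,λ}(i,k). -/

import Mathlib

open Finset

/-- generalized falling factorial: (x)_{n,λ} = x(x-λ)···(x-(n-1)λ) -/
def dff (lam x : ℝ) (n : ℕ) : ℝ := ∏ i ∈ Finset.range n, (x - i * lam)

/-- generalized rising factorial: ⟨x⟩_{n,λ} = x(x+λ)···(x+(n-1)λ) -/
def drf (lam x : ℝ) (n : ℕ) : ℝ := ∏ i ∈ Finset.range n, (x + i * lam)

lemma dff_succ (lam x : ℝ) (n : ℕ) : dff lam x (n+1) = dff lam x n * (x - n * lam) := by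
  simp [dff, Finset.prod_range_succ]

lemma vand (lam x y : ℝ) (n : ℕ) : dff lam (x + y) n
    = ∑ i ∈ range (n+1), (n.choose i : ℝ) * dff lam x i * dff lam y (n - i) := by
  induction n with
  | zero => simp [dff]
  | succ n ih =>
    rw [dff_succ, ih, Finset.sum_mul]
    have key : ∀ i ∈ range (n+1),
        (n.choose i : ℝ) * dff lam x i * dff lam y (n-i) * (x + y - n * lam)
        = (n.choose i : ℝ) * (dff lam x (i+1) * dff lam y (n-i))
          + (n.choose i : ℝ) * (dff lam x i * dff lam y (n-i+1)) := by
      intro i hi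
      have hin : i ≤ n := by simpa [Nat.lt_succ_iff] using hi
      have hcast : ((n - i : ℕ) : ℝ) = (n : ℝ) - i := by
        push_cast [hin]; ring
      rw [dff_succ, dff_succ, hcast]
      ring
    rw [Finset.sum_congr rfl key, Finset.sum_add_distrib]
    have hrhs : ∑ j ∈ range (n+2), ((n+1).choose j : ℝ) * dff lam x j * dff lam y (n+1-j)
        = (∑ j ∈ range (n+1), (n.choose j : ℝ) * dff lam x (j+1) * dff lam y (n-j))
          + (∑ j ∈ range (n+1), ((n.choose (j+1)) : ℝ) * dff lam x (j+1) * dff lam y (n-j))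
          + dff lam x 0 * dff lam y (n+1) := by
      rw [Finset.sum_range_succ']
      have : ∀ j ∈ range (n+1),
          (((n+1).choose (j+1) : ℕ) : ℝ) * dff lam x (j+1) * dff lam y (n+1-(j+1))
          = (n.choose j : ℝ) * dff lam x (j+1) * dff lam y (n-j)
            + ((n.choose (j+1)) : ℝ) * dff lam x (j+1) * dff lam y (n-j) := by
        intro j hj
        have : (n+1-(j+1)) = n - j := by omega
        rw [this, Nat.choose_succ_succ]
        push_cast
        ring
      rw [Finset.sum_congr rfl this, Finset.sum_add_distrib]
      simp
    have hsecond : (∑ j ∈ range (n+1), ((n.choose (j+1)) : ℝ) * dff lam x (j+1) * dff lam y (n-j))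
          + dff lam x 0 * dff lam y (n+1)
        = ∑ i ∈ range (n+1), (n.choose i : ℝ) * dff lam x i * dff lam y (n-i+1) := by
      have h1 : ∑ j ∈ range (n+2), (n.choose j : ℝ) * dff lam x j * dff lam y (n+1-j)
          = (∑ j ∈ range (n+1), ((n.choose (j+1)) : ℝ) * dff lam x (j+1) * dff lam y (n-j))
            + dff lam x 0 * dff lam y (n+1) := by
        rw [Finset.sum_range_succ']
        congr 1
        · apply Finset.sum_congr rfl
          intro j hj
          have : (n+1-(j+1)) = n - j := by omega
          rw [this]
        · simp
      rw [← h1, Finset.sum_range_succ]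
      simp
      apply Finset.sum_congr rfl
      intro j hj
      have hjn : j ≤ n := by simpa [Nat.lt_succ_iff] using hj
      have : (n+1-j) = n - j + 1 := by omega
      rw [this]
    calc (∑ i ∈ range (n+1), (n.choose i : ℝ) * (dff lam x (i+1) * dff lam y (n-i)))
          + ∑ i ∈ range (n+1), (n.choose i : ℝ) * (dff lam x i * dff lam y (n-i+1))
        = (∑ j ∈ range (n+1), (n.choose j : ℝ) * dff lam x (j+1) * dff lam y (n-j))
          + ((∑ j ∈ range (n+1), ((n.choose (j+1)) : ℝ) * dff lam x (j+1) * dff lam y (n-j))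
          + dff lam x 0 * dff lam y (n+1)) := by
          rw [hsecond]
          congr 1
          · apply Finset.sum_congr rfl; intro j hj; ring
          · apply Finset.sum_congr rfl; intro j hj; ring
      _ = ∑ j ∈ range (n+2), ((n+1).choose j : ℝ) * dff lam x j * dff lam y (n+1-j) := by
          rw [hrhs]; ring

lemma dff1_nat_lt (j k : ℕ) (h : j < k) : dff 1 (j : ℝ) k = 0 := by
  apply Finset.prod_eq_zero (Finset.mem_range.2 h)
  simp

lemma dff1_nat_self_ne (j : ℕ) : dff 1 (j : ℝ) j ≠ 0 := by
  apply Finset.prod_ne_zero_iff.2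
  intro i hi
  have : i < j := Finset.mem_range.1 hi
  have : (i : ℝ) < j := by exact_mod_cast this
  intro hc
  nlinarith

lemma uniq (m : ℕ) (c : ℕ → ℝ) (h : ∀ x : ℝ, ∑ k ∈ range m, c k * dff 1 x k = 0) :
    ∀ k, k < m → c k = 0 := by
  intro k
  induction k using Nat.strong_induction_on with
  | _ j ih =>
    intro hj
    have hx := h (j : ℝ)
    have : ∑ k ∈ range m, c k * dff 1 (j : ℝ) k = c j * dff 1 (j : ℝ) j := by
      apply Finset.sum_eq_single_of_mem j (Finset.mem_range.2 hj)
      intro b hb hbj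
      rcases lt_or_gt_of_ne hbj with h1 | h1
      · rw [ih b h1 (Finset.mem_range.1 hb)]; ring
      · rw [dff1_nat_lt j b h1]; ring
    rw [this] at hx
    exact (mul_eq_zero.1 hx).resolve_right (dff1_nat_self_ne j)

theorem stmt7 (r : ℕ) (lam : ℝ) (Str2 S2 : ℕ → ℕ → ℝ)
    (hStr2 : ∀ n : ℕ, ∀ x : ℝ,
      dff lam (x + r) n = ∑ k ∈ range (n + 1), Str2 n k * dff 1 x k)
    (hS2 : ∀ n : ℕ, ∀ x : ℝ,
      dff lam x n = ∑ k ∈ range (n + 1), S2 n k * dff 1 x k) :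
    ∀ n k : ℕ, k ≤ n →
      Str2 n k = ∑ i ∈ Finset.Icc k n,
        (n.choose i : ℝ) * dff lam (r : ℝ) (n - i) * S2 i k := by
  intro n k hk
  set B : ℕ → ℝ := fun k => ∑ i ∈ Finset.Icc k n,
    (n.choose i : ℝ) * dff lam (r : ℝ) (n - i) * S2 i k with hB
  have expand : ∀ x : ℝ, dff lam (x + r) n = ∑ k ∈ range (n+1), B k * dff 1 x k := by
    intro x
    rw [vand lam x (r : ℝ) n]
    have step : ∀ i ∈ range (n+1),
        (n.choose i : ℝ) * dff lam x i * dff lam (r : ℝ) (n - i)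
        = ∑ j ∈ range (i+1),
            ((n.choose i : ℝ) * dff lam (r : ℝ) (n - i) * S2 i j) * dff 1 x j := by
      intro i hi
      rw [hS2 i x, Finset.mul_sum, Finset.sum_mul]
      exact Finset.sum_congr rfl fun j hj => by ring
    rw [Finset.sum_congr rfl step]
    have swap : ∑ i ∈ range (n+1), ∑ j ∈ range (i+1),
          ((n.choose i : ℝ) * dff lam (r : ℝ) (n - i) * S2 i j) * dff 1 x j
        = ∑ j ∈ range (n+1), ∑ i ∈ Finset.Icc j n,
          ((n.choose i : ℝ) * dff lam (r : ℝ) (n - i) * S2 i j) * dff 1 x j := by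
      apply Finset.sum_comm'
      intro i j
      simp only [Finset.mem_range, Finset.mem_Icc, Nat.lt_succ_iff]
      omega
    rw [swap]
    apply Finset.sum_congr rfl
    intro j hj
    rw [hB, Finset.sum_mul]
  have hzero : ∀ x : ℝ, ∑ j ∈ range (n+1), (Str2 n j - B j) * dff 1 x j = 0 := by
    intro x
    simp only [sub_mul]
    rw [Finset.sum_sub_distrib, ← hStr2 n x, ← expand x, sub_self]
  have h := uniq (n+1) (fun j => Str2 n j - B j) hzero k (by omega)
  linarith
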